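/- Let n ≥ 1, k ≥ 1 and let d_1, …, d_k ∈ ℝ^n. Then min_{‖h‖=1} max_{1≤i≤k} ⟨d_i, h⟩ = 0 if and only if 0 belongs to the boundary of the convex hull conv{d_1, …, d_k}. -/

import Mathlib

open scoped RealInnerProductSpace

section Aux

variable {n k : ℕ}

local notation "E" n => EuclideanSpace ℝ (Fin n)

/-- Every point of the convex hull has inner product at most the sup. -/
lemma aux_inner_le_sup [Nonempty (Fin k)] (d : Fin k → EuclideanSpace ℝ (Fin n))
    (h x : EuclideanSpace ℝ (Fin n)) (hx : x ∈ convexHull ℝ (Set.range d)) :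
    ⟪x, h⟫ ≤ ⨆ i, ⟪d i, h⟫ := by
  have hlin : IsLinearMap ℝ (fun y : EuclideanSpace ℝ (Fin n) => ⟪y, h⟫) :=
    ⟨fun a b => inner_add_left a b h, fun c a => real_inner_smul_left a h c⟩
  have hsub : convexHull ℝ (Set.range d) ⊆ {y | ⟪y, h⟫ ≤ ⨆ i, ⟪d i, h⟫} := by
    apply convexHull_min _ (convex_halfSpace_le hlin _)
    rintro _ ⟨i, rfl⟩
    exact le_ciSup (f := fun j => ⟪d j, h⟫) (Finite.bddAbove_range _) i
  exact hsub hx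

/-- Supporting hyperplane at `0` on the boundary. -/
lemma aux_support [Nonempty (Fin k)] (d : Fin k → EuclideanSpace ℝ (Fin n))
    (h0C : (0 : EuclideanSpace ℝ (Fin n)) ∈ convexHull ℝ (Set.range d))
    (h0i : (0 : EuclideanSpace ℝ (Fin n)) ∉ interior (convexHull ℝ (Set.range d))) :
    ∃ h : EuclideanSpace ℝ (Fin n), ‖h‖ = 1 ∧
      ∀ x ∈ convexHull ℝ (Set.range d), ⟪x, h⟫ ≤ 0 := by
  set C : Set (EuclideanSpace ℝ (Fin n)) := convexHull ℝ (Set.range d) with hCdef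
  have hC_conv : Convex ℝ C := convex_convexHull ℝ _
  rcases (interior C).eq_empty_or_nonempty with hint | ⟨z, hz⟩
  · -- empty interior : C sits in a proper subspace
    have hspan : affineSpan ℝ C ≠ ⊤ := by
      intro htop
      rcases hC_conv.interior_nonempty_iff_affineSpan_eq_top.2 htop with ⟨w, hw⟩
      rw [hint] at hw; exact hw
    have hdir : (affineSpan ℝ C).direction ≠ ⊤ := by
      intro h
      exact hspan ((AffineSubspace.direction_eq_top_iff_of_nonempty
        ⟨0, subset_affineSpan ℝ C h0C⟩).1 h)
    have horth : ((affineSpan ℝ C).direction)ᗮ ≠ ⊥ := by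
      intro h; exact hdir (Submodule.orthogonal_eq_bot_iff.1 h)
    obtain ⟨y, hyV, hy0⟩ := Submodule.exists_mem_ne_zero_of_ne_bot horth
    refine ⟨‖y‖⁻¹ • y, ?_, ?_⟩
    · rw [norm_smul, norm_inv, norm_norm, inv_mul_cancel₀ (norm_ne_zero_iff.2 hy0)]
    · intro x hx
      have hxV : x ∈ (affineSpan ℝ C).direction := by
        have := AffineSubspace.vsub_mem_direction (subset_affineSpan ℝ C hx)
          (subset_affineSpan ℝ C h0C)
        simpa [vsub_eq_sub] using this
      have : ⟪x, y⟫ = 0 := (Submodule.mem_orthogonal _ y).1 hyV x hxV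
      rw [real_inner_smul_right, this, mul_zero]
  · -- nonempty interior : separate `0` from the open interior
    obtain ⟨f, hf⟩ := geometric_hahn_banach_open_point hC_conv.interior isOpen_interior h0i
    have hf0 : f (0 : EuclideanSpace ℝ (Fin n)) = 0 := map_zero f
    have hfz : f z < 0 := by have := hf z hz; rwa [hf0] at this
    have hfC : ∀ x ∈ C, f x ≤ 0 := by
      intro x hx
      by_contra hpos
      push_neg at hpos
      set t : ℝ := f x / (f x - f z) with ht_def
      have hsub : (0:ℝ) < f x - f z := by linarith
      have ht : t ∈ Set.Ioc (0:ℝ) 1 := by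
        constructor
        · exact div_pos hpos hsub
        · rw [div_le_one hsub]; linarith
      have hp : x + t • (z - x) ∈ interior C :=
        hC_conv.add_smul_sub_mem_interior hx hz ht
      have hval : f (x + t • (z - x)) = f x + t * (f z - f x) := by
        simp [map_add, map_smul, map_sub, smul_eq_mul]
      have hcalc : t * (f z - f x) = -f x := by
        rw [ht_def]; field_simp; ring
      have : f (x + t • (z - x)) = 0 := by rw [hval, hcalc]; ring
      have hlt := hf _ hp
      rw [hf0] at hlt
      linarith
    -- represent `f` by a vector
    set y := (InnerProductSpace.toDual ℝ (EuclideanSpace ℝ (Fin n))).symm f with hy_def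
    have hyx : ∀ x, ⟪y, x⟫ = f x := fun x => InnerProductSpace.toDual_symm_apply
    have hy0 : y ≠ 0 := by
      intro h
      have := hyx z
      rw [h, inner_zero_left] at this
      linarith
    refine ⟨‖y‖⁻¹ • y, ?_, ?_⟩
    · rw [norm_smul, norm_inv, norm_norm, inv_mul_cancel₀ (norm_ne_zero_iff.2 hy0)]
    · intro x hx
      have : ⟪x, y⟫ ≤ 0 := by rw [real_inner_comm, hyx]; exact hfC x hx
      rw [real_inner_smul_right]
      exact mul_nonpos_of_nonneg_of_nonpos (inv_nonneg.2 (norm_nonneg y)) this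

end Aux

/-- `min_{‖h‖=1} max_i ⟨d_i, h⟩ = 0` iff `0 ∈ bdry(conv{d₁, …, d_k})`. -/
theorem stmt3 (n k : ℕ) (hn : 1 ≤ n) (hk : 1 ≤ k)
    (d : Fin k → EuclideanSpace ℝ (Fin n)) :
    sInf {r : ℝ | ∃ h : EuclideanSpace ℝ (Fin n), ‖h‖ = 1 ∧ r = ⨆ i, ⟪d i, h⟫} = 0 ↔
      (0 : EuclideanSpace ℝ (Fin n)) ∈ frontier (convexHull ℝ (Set.range d)) := by
  haveI : Nonempty (Fin k) := ⟨⟨0, hk⟩⟩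
  haveI : Nonempty (Fin n) := ⟨⟨0, hn⟩⟩
  set C : Set (EuclideanSpace ℝ (Fin n)) := convexHull ℝ (Set.range d) with hCdef
  set A : Set ℝ :=
    {r : ℝ | ∃ h : EuclideanSpace ℝ (Fin n), ‖h‖ = 1 ∧ r = ⨆ i, ⟪d i, h⟫} with hAdef
  have hC_conv : Convex ℝ C := convex_convexHull ℝ _
  have hC_closed : IsClosed C := (Set.finite_range d).isClosed_convexHull (𝕜 := ℝ)
  have hd_mem : ∀ i, d i ∈ C := fun i => subset_convexHull ℝ _ ⟨i, rfl⟩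
  have i0 : Fin k := Classical.arbitrary _
  have bddA : BddBelow A := by
    refine ⟨-‖d i0‖, ?_⟩
    rintro r ⟨h, hh, rfl⟩
    have h1 : ⟪d i0, h⟫ ≤ ⨆ i, ⟪d i, h⟫ :=
      le_ciSup (f := fun j => ⟪d j, h⟫) (Finite.bddAbove_range _) i0
    have h2 : |⟪d i0, h⟫| ≤ ‖d i0‖ * ‖h‖ := abs_real_inner_le_norm _ _
    rw [hh, mul_one] at h2
    have := (abs_le.1 h2).1
    linarith
  have hunit : ∃ h : EuclideanSpace ℝ (Fin n), ‖h‖ = 1 :=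
    ⟨EuclideanSpace.single (⟨0, hn⟩ : Fin n) (1:ℝ), by
      simp [EuclideanSpace.norm_single]⟩
  obtain ⟨h₀, hh₀⟩ := hunit
  have nonemptyA : A.Nonempty := ⟨_, h₀, hh₀, rfl⟩
  constructor
  · -- μ = 0 → 0 ∈ frontier C
    intro hmu
    rw [hC_closed.frontier_eq]
    constructor
    · -- 0 ∈ C
      by_contra h0C
      obtain ⟨f, u, hfu, hu0⟩ := geometric_hahn_banach_closed_point hC_conv hC_closed h0C
      rw [map_zero] at hu0
      set y := (InnerProductSpace.toDual ℝ (EuclideanSpace ℝ (Fin n))).symm f with hy_def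
      have hyx : ∀ x, ⟪y, x⟫ = f x := fun x => InnerProductSpace.toDual_symm_apply
      have hy0 : y ≠ 0 := by
        intro h
        have := hyx (d i0)
        rw [h, inner_zero_left] at this
        have := hfu (d i0) (hd_mem i0)
        linarith
      set h : EuclideanSpace ℝ (Fin n) := ‖y‖⁻¹ • y with hh_def
      have hnorm : ‖h‖ = 1 := by
        rw [hh_def, norm_smul, norm_inv, norm_norm,
          inv_mul_cancel₀ (norm_ne_zero_iff.2 hy0)]
      have hinvpos : (0:ℝ) < ‖y‖⁻¹ := inv_pos.2 (norm_pos_iff.2 hy0)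
      have hsup : (⨆ i, ⟪d i, h⟫) ≤ ‖y‖⁻¹ * u := by
        refine ciSup_le fun i => ?_
        have : ⟪d i, h⟫ = ‖y‖⁻¹ * ⟪y, d i⟫ := by
          rw [hh_def, real_inner_smul_right, real_inner_comm]
        rw [this, hyx]
        exact mul_le_mul_of_nonneg_left (hfu (d i) (hd_mem i)).le hinvpos.le
      have hneg : ‖y‖⁻¹ * u < 0 := mul_neg_of_pos_of_neg hinvpos hu0
      have : sInf A ≤ ⨆ i, ⟪d i, h⟫ := csInf_le bddA ⟨h, hnorm, rfl⟩
      linarith [hmu ▸ this]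
    · -- 0 ∉ interior C
      intro h0i
      have hmem : C ∈ nhds (0 : EuclideanSpace ℝ (Fin n)) :=
        mem_interior_iff_mem_nhds.1 h0i
      obtain ⟨ε, hε, hball⟩ := Metric.mem_nhds_iff.1 hmem
      have hlow : ∀ r ∈ A, ε / 2 ≤ r := by
        rintro r ⟨h, hh, rfl⟩
        have hxC : (ε / 2) • h ∈ C := by
          apply hball
          rw [Metric.mem_ball, dist_zero_right, norm_smul, hh, mul_one,
            Real.norm_eq_abs, abs_of_pos (by linarith)]
          linarith
        have := aux_inner_le_sup d h _ hxC
        rw [real_inner_smul_left, real_inner_self_eq_norm_sq, hh] at this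
        simpa using this
      have : ε / 2 ≤ sInf A := le_csInf nonemptyA hlow
      rw [hmu] at this
      linarith
  · -- 0 ∈ frontier C → μ = 0
    intro hfr
    rw [hC_closed.frontier_eq] at hfr
    obtain ⟨h0C, h0i⟩ := hfr
    have hge : 0 ≤ sInf A := by
      refine le_csInf nonemptyA ?_
      rintro r ⟨h, hh, rfl⟩
      have := aux_inner_le_sup d h 0 h0C
      rwa [inner_zero_left] at this
    obtain ⟨h, hh, hsupp⟩ := aux_support d h0C h0i
    have hle : sInf A ≤ 0 := by
      have h1 : sInf A ≤ ⨆ i, ⟪d i, h⟫ := csInf_le bddA ⟨h, hh, rfl⟩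
      have h2 : (⨆ i, ⟪d i, h⟫) ≤ 0 := ciSup_le fun i => hsupp (d i) (hd_mem i)
      linarith
    linarith
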